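/- A matrix with entries in {0,1} such that every column contains at most two nonzero entries, and whose rows can be partitioned into two sets R1 and R2 so that each column has at most one nonzero entry in R1 and at most one nonzero entry in R2, is totally unimodular. -/

import Mathlib

/-- A `{0,1}`-matrix in which every column has at most two nonzero
entries and whose rows can be partitioned into two classes such that every
column has at most one nonzero entry in each class is totally unimodular. -/
theorem stmt_1 {R C : Type*} [Fintype R] [DecidableEq R]
    (A : Matrix R C ℚ)
    (h01 : ∀ i j, A i j = 0 ∨ A i j = 1)
    (hcol : ∀ j : C, (Finset.univ.filter (fun i => A i j ≠ 0)).card ≤ 2)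
    (r : R → Bool)
    (hpart : ∀ j : C,
      (Finset.univ.filter (fun i => A i j ≠ 0 ∧ r i = true)).card ≤ 1 ∧
      (Finset.univ.filter (fun i => A i j ≠ 0 ∧ r i = false)).card ≤ 1) :
    A.IsTotallyUnimodular := by
  intro k
  induction k with
  | zero => intro f g _ _; exact ⟨1, by simp⟩
  | succ k ih =>
    intro f g hf hg
    by_cases hcase : ∃ j : Fin (k+1),
        (Finset.univ.filter (fun i : Fin (k+1) => A (f i) (g j) ≠ 0)).card ≤ 1
    · obtain ⟨j, hj⟩ := hcase
      rcases Nat.le_one_iff_eq_zero_or_eq_one.mp hj with h0 | h1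
      · -- column j of the submatrix is all zeros
        refine ⟨0, ?_⟩
        rw [SignType.coe_zero, eq_comm]
        apply Matrix.det_eq_zero_of_column_eq_zero j
        intro i
        rw [Finset.card_eq_zero, Finset.filter_eq_empty_iff] at h0
        have := h0 (Finset.mem_univ i)
        simpa [Matrix.submatrix_apply] using this
      · -- column j of the submatrix has exactly one nonzero (hence = 1) entry
        obtain ⟨i₀, hi₀⟩ := Finset.card_eq_one.mp h1
        have hmem : ∀ i : Fin (k+1), A (f i) (g j) ≠ 0 ↔ i = i₀ := by
          intro i
          rw [← Finset.mem_singleton, ← hi₀, Finset.mem_filter]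
          simp
        have hB0 : ∀ i : Fin (k+1), i ≠ i₀ → A (f i) (g j) = 0 := by
          intro i hi
          by_contra h
          exact hi ((hmem i).mp h)
        have hB1 : A (f i₀) (g j) = 1 := by
          have hne : A (f i₀) (g j) ≠ 0 := (hmem i₀).mpr rfl
          rcases h01 (f i₀) (g j) with h | h
          · exact absurd h hne
          · exact h
        rw [Matrix.det_succ_column _ j,
          Fintype.sum_eq_single i₀ (fun i hi => by
            rw [Matrix.submatrix_apply, hB0 i hi, mul_zero, zero_mul]),
          Matrix.submatrix_apply, hB1, mul_one]
        change _ ∈ MonoidHom.mrange SignType.castHom.toMonoidHom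
        refine mul_mem ?_ ?_
        · apply pow_mem
          exact ⟨-1, by simp⟩
        rw [Matrix.submatrix_submatrix]
        exact ih (f ∘ i₀.succAbove) (g ∘ j.succAbove)
          (hf.comp (Fin.succAbove_right_injective))
          (hg.comp (Fin.succAbove_right_injective))
    · -- every column of the submatrix has at least two nonzero entries
      push_neg at hcase
      refine ⟨0, ?_⟩
      rw [SignType.coe_zero, eq_comm]
      set v : Fin (k+1) → ℚ := fun i => if r (f i) = true then 1 else -1 with hv
      have hv0 : v ≠ 0 := by
        intro h
        have := congrFun h 0
        simp only [hv, Pi.zero_apply] at this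
        split_ifs at this <;> norm_num at this
      refine Matrix.exists_vecMul_eq_zero_iff.mp ⟨v, hv0, ?_⟩
      funext j
      set S : Finset (Fin (k+1)) :=
        Finset.univ.filter (fun i : Fin (k+1) => A (f i) (g j) ≠ 0) with hS
      have hcard2 : 2 ≤ S.card := hcase j
      -- the two class filters
      set St := S.filter (fun i => r (f i) = true) with hSt
      set Sf := S.filter (fun i => ¬ r (f i) = true) with hSf
      have hSt1 : St.card ≤ 1 := by
        refine le_trans (Finset.card_le_card_of_injOn f ?_ (hf.injOn)) (hpart (g j)).1
        intro i hi
        simp only [hSt, hS, Finset.mem_coe, Finset.mem_filter, Finset.mem_univ, true_and] at hi ⊢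
        exact hi
      have hSf1 : Sf.card ≤ 1 := by
        refine le_trans (Finset.card_le_card_of_injOn f ?_ (hf.injOn)) (hpart (g j)).2
        intro i hi
        simp only [hSf, hS, Finset.mem_coe, Finset.mem_filter, Finset.mem_univ, true_and,
          Bool.not_eq_true] at hi ⊢
        exact hi
      have hsplit : St.card + Sf.card = S.card :=
        Finset.card_filter_add_card_filter_not _
      have hSt' : St.card = 1 := by omega
      have hSf' : Sf.card = 1 := by omega
      -- compute the entry of the vecMul
      have : Matrix.vecMul v (A.submatrix f g) j = ∑ i ∈ S, v i := by
        simp only [Matrix.vecMul, dotProduct, Matrix.submatrix_apply]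
        rw [show (∑ i : Fin (k+1), v i * A (f i) (g j))
            = ∑ i : Fin (k+1), if A (f i) (g j) ≠ 0 then v i else 0 from
          Finset.sum_congr rfl (fun i _ => by
            rcases h01 (f i) (g j) with h | h <;> simp [h])]
        rw [← Finset.sum_filter, ← hS]
      rw [Pi.zero_apply, this, ← Finset.sum_filter_add_sum_filter_not S
        (fun i => r (f i) = true) v, ← hSt, ← hSf]
      have e1 : ∑ i ∈ St, v i = 1 := by
        rw [Finset.sum_congr rfl (fun i hi => ?_), Finset.sum_const, hSt', one_smul]
        simp only [hSt, Finset.mem_filter] at hi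
        simp [hv, hi.2]
      have e2 : ∑ i ∈ Sf, v i = -1 := by
        rw [Finset.sum_congr rfl (fun i hi => ?_), Finset.sum_const, hSf', one_smul]
        simp only [hSf, Finset.mem_filter] at hi
        simp [hv, hi.2]
      rw [e1, e2]
      ring
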